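/- Let R be a quasi-unital ring. The category of R-bimodules that are smooth on both sides, equipped with the relative tensor product (M, N) ↦ M ⊗_R N, is a monoidal category with unit object R: for every two-sidedly smooth bimodule M there are natural isomorphisms R ⊗_R M ≅ M and M ⊗_R R ≅ M, and the tensor product of two two-sidedly smooth bimodules is again two-sidedly smooth. -/

import Mathlib

open TensorProduct LinearMap

variable (R : Type) [NonUnitalRing R] [Module ℂ R] [SMulCommClass ℂ R R]
  [IsScalarTower ℂ R R]

/-- The bar differential `R ⊗ R ⊗ R → R ⊗ R`. -/
noncomputable def barD : (R ⊗[ℂ] (R ⊗[ℂ] R)) →ₗ[ℂ] R ⊗[ℂ] R :=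
  (rTensor R (mul' ℂ R)) ∘ₗ (TensorProduct.assoc ℂ R R R).symm.toLinearMap
    - lTensor R (mul' ℂ R)

/-- `R` is quasi-unital. -/
def IsQuasiUnital : Prop :=
  ∃ f : ((R ⊗[ℂ] R) ⧸ LinearMap.range (barD R)) →ₗ[ℂ] R,
    f ∘ₗ (LinearMap.range (barD R)).mkQ = mul' ℂ R ∧ Function.Bijective f

section Bimod

variable {M : Type} [AddCommGroup M] [Module ℂ M]

/-- Left-module bar differential `R ⊗ R ⊗ M → R ⊗ M` (left action `l`). -/
noncomputable def barDl (l : R →ₗ[ℂ] M →ₗ[ℂ] M) :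
    (R ⊗[ℂ] (R ⊗[ℂ] M)) →ₗ[ℂ] R ⊗[ℂ] M :=
  (rTensor M (mul' ℂ R)) ∘ₗ (TensorProduct.assoc ℂ R R M).symm.toLinearMap
    - lTensor R (TensorProduct.lift l)

/-- Right-module bar differential `M ⊗ R ⊗ R → M ⊗ R` (right action `ρ`,
`m · r := ρ r m`). -/
noncomputable def barDr (ρ : R →ₗ[ℂ] M →ₗ[ℂ] M) :
    (M ⊗[ℂ] (R ⊗[ℂ] R)) →ₗ[ℂ] M ⊗[ℂ] R :=
  (rTensor R (TensorProduct.lift ρ.flip)) ∘ₗ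
      (TensorProduct.assoc ℂ M R R).symm.toLinearMap
    - lTensor M (mul' ℂ R)

variable {N : Type} [AddCommGroup N] [Module ℂ N]

/-- Relations differential `M ⊗ R ⊗ N → M ⊗ N` for the relative tensor product
`M ⊗_R N` (right action `ρM` on `M`, left action `lN` on `N`). -/
noncomputable def barDRel (ρM : R →ₗ[ℂ] M →ₗ[ℂ] M) (lN : R →ₗ[ℂ] N →ₗ[ℂ] N) :
    (M ⊗[ℂ] (R ⊗[ℂ] N)) →ₗ[ℂ] M ⊗[ℂ] N :=
  (rTensor N (TensorProduct.lift ρM.flip)) ∘ₗ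
      (TensorProduct.assoc ℂ M R N).symm.toLinearMap
    - lTensor M (TensorProduct.lift lN)

/-- The relative tensor product `M ⊗_R N`. -/
noncomputable abbrev RelTensor (ρM : R →ₗ[ℂ] M →ₗ[ℂ] M) (lN : R →ₗ[ℂ] N →ₗ[ℂ] N) :=
  (M ⊗[ℂ] N) ⧸ LinearMap.range (barDRel R ρM lN)
set_option linter.unusedSectionVars false

lemma barDl_tmul (l : R →ₗ[ℂ] M →ₗ[ℂ] M) (r s : R) (m : M) :
    barDl R l (r ⊗ₜ[ℂ] (s ⊗ₜ[ℂ] m)) = (r * s) ⊗ₜ[ℂ] m - r ⊗ₜ[ℂ] (l s m) := by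
  simp [barDl, mul'_apply]

lemma barDr_tmul (ρ : R →ₗ[ℂ] M →ₗ[ℂ] M) (m : M) (s r : R) :
    barDr R ρ (m ⊗ₜ[ℂ] (s ⊗ₜ[ℂ] r)) = (ρ s m) ⊗ₜ[ℂ] r - m ⊗ₜ[ℂ] (s * r) := by
  simp [barDr, mul'_apply]

lemma barDRel_tmul (ρM : R →ₗ[ℂ] M →ₗ[ℂ] M) (lN : R →ₗ[ℂ] N →ₗ[ℂ] N)
    (m : M) (s : R) (n : N) :
    barDRel R ρM lN (m ⊗ₜ[ℂ] (s ⊗ₜ[ℂ] n)) = (ρM s m) ⊗ₜ[ℂ] n - m ⊗ₜ[ℂ] (lN s n) := by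
  simp [barDRel]

lemma bijective_of_comp {A B C : Type*} [AddCommGroup A] [AddCommGroup B] [AddCommGroup C]
    [Module ℂ A] [Module ℂ B] [Module ℂ C]
    (p : A →ₗ[ℂ] B) (π : A →ₗ[ℂ] C) (g : B →ₗ[ℂ] C) (h : C →ₗ[ℂ] B)
    (hp : Function.Surjective p) (hπ : Function.Surjective π)
    (hg : ∀ a, g (p a) = π a) (hh : ∀ a, h (π a) = p a) : Function.Bijective g := by
  refine Function.bijective_iff_has_inverse.mpr ⟨h, ?_, ?_⟩
  · intro b; obtain ⟨a, rfl⟩ := hp b; rw [hg, hh]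
  · intro c; obtain ⟨a, rfl⟩ := hπ c; rw [hh, hg]

set_option maxHeartbeats 16000000 in
lemma left_transfer
    (lM ρM : R →ₗ[ℂ] M →ₗ[ℂ] M)
    (hcM : ∀ (r s : R) (m : M), lM r (ρM s m) = ρM s (lM r m))
    (hMl : ∃ f : ((R ⊗[ℂ] M) ⧸ LinearMap.range (barDl R lM)) →ₗ[ℂ] M,
      f ∘ₗ (LinearMap.range (barDl R lM)).mkQ = TensorProduct.lift lM ∧
      Function.Bijective f)
    (lN : R →ₗ[ℂ] N →ₗ[ℂ] N)
    (lT : R →ₗ[ℂ] RelTensor R ρM lN →ₗ[ℂ] RelTensor R ρM lN)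
    (hlT : ∀ (r : R) (m : M) (n : N),
      lT r ((LinearMap.range (barDRel R ρM lN)).mkQ (m ⊗ₜ[ℂ] n)) =
        (LinearMap.range (barDRel R ρM lN)).mkQ ((lM r m) ⊗ₜ[ℂ] n)) :
    Function.Surjective (TensorProduct.lift lT) ∧
    ∃ h : RelTensor R ρM lN →ₗ[ℂ]
        ((R ⊗[ℂ] RelTensor R ρM lN) ⧸ LinearMap.range (barDl R lT)),
      ∀ x, h (TensorProduct.lift lT x) = (LinearMap.range (barDl R lT)).mkQ x := by
  obtain ⟨f, hfq, hfbij⟩ := hMl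
  set T := RelTensor R ρM lN with hT
  set q : M ⊗[ℂ] N →ₗ[ℂ] T := (LinearMap.range (barDRel R ρM lN)).mkQ with hq
  set qT := (LinearMap.range (barDl R lT)).mkQ with hqT
  set qM := (LinearMap.range (barDl R lM)).mkQ with hqM
  -- the inverse of f
  set e := (LinearEquiv.ofBijective f hfbij).symm with he
  have hfe : ∀ m : M, f (e m) = m := fun m =>
    (LinearEquiv.ofBijective f hfbij).apply_symm_apply m
  have ekey : ∀ x : R ⊗[ℂ] M, e (TensorProduct.lift lM x) = qM x := by
    intro x
    have h1 : TensorProduct.lift lM x = f (qM x) := (LinearMap.congr_fun hfq x).symm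
    rw [h1]
    exact (LinearEquiv.ofBijective f hfbij).symm_apply_apply (qM x)
  -- the bilinear map B
  set c : (R ⊗[ℂ] M) ⊗[ℂ] N →ₗ[ℂ] ((R ⊗[ℂ] T) ⧸ LinearMap.range (barDl R lT)) :=
    qT ∘ₗ (lTensor R q) ∘ₗ (TensorProduct.assoc ℂ R M N).toLinearMap with hc
  set B := TensorProduct.curry c with hB
  have hBtmul : ∀ (r : R) (m : M) (n : N), B (r ⊗ₜ[ℂ] m) n = qT (r ⊗ₜ[ℂ] q (m ⊗ₜ[ℂ] n)) := by
    intro r m n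
    simp [hB, hc, TensorProduct.curry_apply]
  have hzeroT : ∀ (r s : R) (t : T), qT ((r * s) ⊗ₜ[ℂ] t) = qT (r ⊗ₜ[ℂ] lT s t) := by
    intro r s t
    rw [← sub_eq_zero, ← map_sub, ← barDl_tmul R lT r s t, hqT, Submodule.mkQ_apply,
      Submodule.Quotient.mk_eq_zero]
    exact LinearMap.mem_range_self _ _
  have hBker : LinearMap.range (barDl R lM) ≤ LinearMap.ker B := by
    rintro _ ⟨y, rfl⟩
    rw [LinearMap.mem_ker]
    induction y using TensorProduct.induction_on with
    | zero => simp
    | add a b ha hb => rw [map_add, map_add, ha, hb, add_zero]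
    | tmul r z =>
      induction z using TensorProduct.induction_on with
      | zero => simp
      | add a b ha hb =>
        rw [TensorProduct.tmul_add, map_add, map_add, ha, hb, add_zero]
      | tmul s m =>
        rw [barDl_tmul]
        apply LinearMap.ext; intro n
        rw [map_sub, LinearMap.sub_apply, hBtmul, hBtmul, hzeroT r s (q (m ⊗ₜ[ℂ] n)),
          hlT, LinearMap.zero_apply, sub_self]
  set Bbar := Submodule.liftQ _ B hBker with hBbar
  have hBbarq : ∀ x : R ⊗[ℂ] M, Bbar (qM x) = B x := fun x =>
    LinearMap.congr_fun (Submodule.liftQ_mkQ _ B hBker) x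
  obtain ⟨H, hH⟩ : ∃ H, H = TensorProduct.lift (Bbar ∘ₗ e.toLinearMap) := ⟨_, rfl⟩
  have hHtmul : ∀ (m : M) (n : N), H (m ⊗ₜ[ℂ] n) = Bbar (e m) n := by
    intro m n
    rw [hH, TensorProduct.lift.tmul]
    rfl
  -- action compatibility
  have hact : ∀ (s : R) (x : R ⊗[ℂ] M),
      ρM s (TensorProduct.lift lM x) = TensorProduct.lift lM (lTensor R (ρM s) x) := by
    intro s x
    induction x using TensorProduct.induction_on with
    | zero => simp
    | add a b ha hb => simp only [map_add, ha, hb]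
    | tmul r m => simp [hcM r s m]
  have hBact : ∀ (s : R) (n : N) (x : R ⊗[ℂ] M),
      B (lTensor R (ρM s) x) n = B x (lN s n) := by
    intro s n x
    induction x using TensorProduct.induction_on with
    | zero => simp
    | add a b ha hb => simp only [map_add, LinearMap.add_apply, ha, hb]
    | tmul r m =>
      rw [lTensor_tmul, hBtmul, hBtmul]
      have hqeq : q ((ρM s m) ⊗ₜ[ℂ] n) = q (m ⊗ₜ[ℂ] (lN s n)) := by
        rw [hq, Submodule.mkQ_apply, Submodule.mkQ_apply, Submodule.Quotient.eq,
          ← barDRel_tmul R ρM lN m s n]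
        exact LinearMap.mem_range_self _ _
      rw [hqeq]
  -- H kills the relations
  have hHker : LinearMap.range (barDRel R ρM lN) ≤ LinearMap.ker H := by
    rintro _ ⟨y, rfl⟩
    rw [LinearMap.mem_ker]
    induction y using TensorProduct.induction_on with
    | zero => simp
    | add a b ha hb => rw [map_add, map_add, ha, hb, add_zero]
    | tmul m z =>
      induction z using TensorProduct.induction_on with
      | zero => simp
      | add a b ha hb => rw [TensorProduct.tmul_add, map_add, map_add, ha, hb, add_zero]
      | tmul s n =>
        rw [barDRel_tmul]
        rw [map_sub]
        rw [hHtmul]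
        rw [hHtmul]
        obtain ⟨x, hx⟩ := Submodule.mkQ_surjective _ (e m)
        have hm : m = TensorProduct.lift lM x := by
          conv_lhs => rw [← hfe m, ← hx]
          exact (LinearMap.congr_fun hfq x)
        have h1 : e (ρM s m) = qM (lTensor R (ρM s) x) := by
          rw [hm, hact s x, ekey]
        rw [h1, ← hx, hBbarq, hBbarq, hBact, sub_self]
  set h := Submodule.liftQ _ H hHker with hh
  have hhq : ∀ y : M ⊗[ℂ] N, h (q y) = H y := fun y =>
    LinearMap.congr_fun (Submodule.liftQ_mkQ _ H hHker) y
  -- the section property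
  have hsec : ∀ x : R ⊗[ℂ] T, h (TensorProduct.lift lT x) = qT x := by
    intro x
    induction x using TensorProduct.induction_on with
    | zero => simp
    | add a b ha hb => rw [map_add, map_add, ha, hb, map_add]
    | tmul r t =>
      obtain ⟨y, rfl⟩ := Submodule.mkQ_surjective _ t
      rw [TensorProduct.lift.tmul]
      induction y using TensorProduct.induction_on with
      | zero => simp
      | add a b ha hb =>
        simp only [map_add, TensorProduct.tmul_add, ha, hb]
      | tmul m n =>
        rw [show ((LinearMap.range (barDRel R ρM lN)).mkQ (m ⊗ₜ[ℂ] n)) = q (m ⊗ₜ[ℂ] n) from rfl,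
          hlT r m n,
          show ((LinearMap.range (barDRel R ρM lN)).mkQ ((lM r m) ⊗ₜ[ℂ] n)) = q ((lM r m) ⊗ₜ[ℂ] n) from rfl,
          hhq, hHtmul]
        have h2 : e (lM r m) = qM (r ⊗ₜ[ℂ] m) := by
          have : lM r m = TensorProduct.lift lM (r ⊗ₜ[ℂ] m) := by simp
          rw [this, ekey]
        rw [h2, hBbarq, hBtmul]
  -- surjectivity
  have hsurj : Function.Surjective (TensorProduct.lift lT) := by
    intro t
    obtain ⟨y, rfl⟩ := Submodule.mkQ_surjective _ t
    induction y using TensorProduct.induction_on with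
    | zero => exact ⟨0, by simp⟩
    | add a b ha hb =>
      obtain ⟨z1, hz1⟩ := ha
      obtain ⟨z2, hz2⟩ := hb
      exact ⟨z1 + z2, by rw [map_add, hz1, hz2, map_add]⟩
    | tmul m n =>
      obtain ⟨u, hu⟩ := hfbij.2 m
      obtain ⟨x, rfl⟩ := Submodule.mkQ_surjective _ u
      have hm : m = TensorProduct.lift lM x := by
        rw [← hu]; exact LinearMap.congr_fun hfq x
      rw [hm]
      clear hm hu
      induction x using TensorProduct.induction_on with
      | zero => exact ⟨0, by simp⟩
      | add a b ha hb =>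
        obtain ⟨z1, hz1⟩ := ha
        obtain ⟨z2, hz2⟩ := hb
        exact ⟨z1 + z2, by
          rw [map_add, hz1, hz2, map_add, TensorProduct.add_tmul, map_add]⟩
      | tmul r m' =>
        refine ⟨r ⊗ₜ[ℂ] q (m' ⊗ₜ[ℂ] n), ?_⟩
        rw [TensorProduct.lift.tmul, hq, hlT r m' n, TensorProduct.lift.tmul]
  exact ⟨hsurj, h, hsec⟩

set_option maxHeartbeats 16000000 in
lemma right_transfer
    (ρM : R →ₗ[ℂ] M →ₗ[ℂ] M)
    (lN ρN : R →ₗ[ℂ] N →ₗ[ℂ] N)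
    (hcN : ∀ (r s : R) (n : N), lN r (ρN s n) = ρN s (lN r n))
    (hNr : ∃ f : ((N ⊗[ℂ] R) ⧸ LinearMap.range (barDr R ρN)) →ₗ[ℂ] N,
      f ∘ₗ (LinearMap.range (barDr R ρN)).mkQ = TensorProduct.lift ρN.flip ∧
      Function.Bijective f)
    (ρT : R →ₗ[ℂ] RelTensor R ρM lN →ₗ[ℂ] RelTensor R ρM lN)
    (hρT : ∀ (r : R) (m : M) (n : N),
      ρT r ((LinearMap.range (barDRel R ρM lN)).mkQ (m ⊗ₜ[ℂ] n)) =
        (LinearMap.range (barDRel R ρM lN)).mkQ (m ⊗ₜ[ℂ] (ρN r n))) :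
    Function.Surjective (TensorProduct.lift ρT.flip) ∧
    ∃ h : RelTensor R ρM lN →ₗ[ℂ]
        ((RelTensor R ρM lN ⊗[ℂ] R) ⧸ LinearMap.range (barDr R ρT)),
      ∀ x, h (TensorProduct.lift ρT.flip x) = (LinearMap.range (barDr R ρT)).mkQ x := by
  obtain ⟨f, hfq, hfbij⟩ := hNr
  set T := RelTensor R ρM lN with hT
  set q : M ⊗[ℂ] N →ₗ[ℂ] T := (LinearMap.range (barDRel R ρM lN)).mkQ with hq
  set qT := (LinearMap.range (barDr R ρT)).mkQ with hqT
  set qN := (LinearMap.range (barDr R ρN)).mkQ with hqN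
  set e := (LinearEquiv.ofBijective f hfbij).symm with he
  have hfe : ∀ n : N, f (e n) = n := fun n =>
    (LinearEquiv.ofBijective f hfbij).apply_symm_apply n
  have ekey : ∀ x : N ⊗[ℂ] R, e (TensorProduct.lift ρN.flip x) = qN x := by
    intro x
    have h1 : TensorProduct.lift ρN.flip x = f (qN x) := (LinearMap.congr_fun hfq x).symm
    rw [h1]
    exact (LinearEquiv.ofBijective f hfbij).symm_apply_apply (qN x)
  set c : (N ⊗[ℂ] R) ⊗[ℂ] M →ₗ[ℂ] ((T ⊗[ℂ] R) ⧸ LinearMap.range (barDr R ρT)) :=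
    qT ∘ₗ (rTensor R q) ∘ₗ (TensorProduct.assoc ℂ M N R).symm.toLinearMap ∘ₗ
      (TensorProduct.comm ℂ (N ⊗[ℂ] R) M).toLinearMap with hc
  set B := TensorProduct.curry c with hB
  have hBtmul : ∀ (n : N) (r : R) (m : M),
      B (n ⊗ₜ[ℂ] r) m = qT (q (m ⊗ₜ[ℂ] n) ⊗ₜ[ℂ] r) := by
    intro n r m
    simp [hB, hc, TensorProduct.curry_apply]
  have hzeroT : ∀ (t : T) (s r : R), qT ((ρT s t) ⊗ₜ[ℂ] r) = qT (t ⊗ₜ[ℂ] (s * r)) := by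
    intro t s r
    rw [← sub_eq_zero, ← map_sub, ← barDr_tmul R ρT t s r, hqT, Submodule.mkQ_apply,
      Submodule.Quotient.mk_eq_zero]
    exact LinearMap.mem_range_self _ _
  have hBker : LinearMap.range (barDr R ρN) ≤ LinearMap.ker B := by
    rintro _ ⟨y, rfl⟩
    rw [LinearMap.mem_ker]
    induction y using TensorProduct.induction_on with
    | zero => simp
    | add a b ha hb => rw [map_add, map_add, ha, hb, add_zero]
    | tmul n z =>
      induction z using TensorProduct.induction_on with
      | zero => simp
      | add a b ha hb =>
        rw [TensorProduct.tmul_add, map_add, map_add, ha, hb, add_zero]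
      | tmul s r =>
        rw [barDr_tmul]
        apply LinearMap.ext; intro m
        rw [map_sub, LinearMap.sub_apply, hBtmul, hBtmul, LinearMap.zero_apply,
          ← hρT s m n, hzeroT (q (m ⊗ₜ[ℂ] n)) s r, sub_self]
  set Bbar := Submodule.liftQ _ B hBker with hBbar
  have hBbarq : ∀ x : N ⊗[ℂ] R, Bbar (qN x) = B x := fun x =>
    LinearMap.congr_fun (Submodule.liftQ_mkQ _ B hBker) x
  obtain ⟨H, hH⟩ : ∃ H, H = TensorProduct.lift ((Bbar ∘ₗ e.toLinearMap).flip) := ⟨_, rfl⟩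
  have hHtmul : ∀ (m : M) (n : N), H (m ⊗ₜ[ℂ] n) = Bbar (e n) m := by
    intro m n
    rw [hH, TensorProduct.lift.tmul]
    rfl
  have hact : ∀ (s : R) (x : N ⊗[ℂ] R),
      lN s (TensorProduct.lift ρN.flip x) = TensorProduct.lift ρN.flip (rTensor R (lN s) x) := by
    intro s x
    induction x using TensorProduct.induction_on with
    | zero => simp
    | add a b ha hb => simp only [map_add, ha, hb]
    | tmul n r => simp [hcN s r n]
  have hBact : ∀ (s : R) (m : M) (x : N ⊗[ℂ] R),
      B (rTensor R (lN s) x) m = B x (ρM s m) := by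
    intro s m x
    induction x using TensorProduct.induction_on with
    | zero => simp
    | add a b ha hb => simp only [map_add, LinearMap.add_apply, ha, hb]
    | tmul n r =>
      rw [rTensor_tmul, hBtmul, hBtmul]
      have hqeq : q (m ⊗ₜ[ℂ] (lN s n)) = q ((ρM s m) ⊗ₜ[ℂ] n) := by
        rw [hq, Submodule.mkQ_apply, Submodule.mkQ_apply, eq_comm, Submodule.Quotient.eq,
          ← barDRel_tmul R ρM lN m s n]
        exact LinearMap.mem_range_self _ _
      rw [hqeq]
  have hHker : LinearMap.range (barDRel R ρM lN) ≤ LinearMap.ker H := by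
    rintro _ ⟨y, rfl⟩
    rw [LinearMap.mem_ker]
    induction y using TensorProduct.induction_on with
    | zero => simp
    | add a b ha hb => rw [map_add, map_add, ha, hb, add_zero]
    | tmul m z =>
      induction z using TensorProduct.induction_on with
      | zero => simp
      | add a b ha hb => rw [TensorProduct.tmul_add, map_add, map_add, ha, hb, add_zero]
      | tmul s n =>
        rw [barDRel_tmul, map_sub, hHtmul, hHtmul]
        obtain ⟨x, hx⟩ := Submodule.mkQ_surjective _ (e n)
        have hn : n = TensorProduct.lift ρN.flip x := by
          conv_lhs => rw [← hfe n, ← hx]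
          exact (LinearMap.congr_fun hfq x)
        have h1 : e (lN s n) = qN (rTensor R (lN s) x) := by
          rw [hn, hact s x, ekey]
        rw [h1, ← hx, hBbarq, hBbarq, hBact, sub_self]
  set h := Submodule.liftQ _ H hHker with hh
  have hhq : ∀ y : M ⊗[ℂ] N, h (q y) = H y := fun y =>
    LinearMap.congr_fun (Submodule.liftQ_mkQ _ H hHker) y
  have hsec : ∀ x : T ⊗[ℂ] R, h (TensorProduct.lift ρT.flip x) = qT x := by
    intro x
    induction x using TensorProduct.induction_on with
    | zero => simp
    | add a b ha hb => rw [map_add, map_add, ha, hb, map_add]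
    | tmul t r =>
      obtain ⟨y, rfl⟩ := Submodule.mkQ_surjective _ t
      rw [TensorProduct.lift.tmul, LinearMap.flip_apply]
      induction y using TensorProduct.induction_on with
      | zero => simp
      | add a b ha hb =>
        simp only [map_add, TensorProduct.add_tmul, ha, hb]
      | tmul m n =>
        rw [show ((LinearMap.range (barDRel R ρM lN)).mkQ (m ⊗ₜ[ℂ] n)) = q (m ⊗ₜ[ℂ] n) from rfl,
          hρT r m n,
          show ((LinearMap.range (barDRel R ρM lN)).mkQ (m ⊗ₜ[ℂ] (ρN r n))) = q (m ⊗ₜ[ℂ] (ρN r n)) from rfl,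
          hhq, hHtmul]
        have h2 : e (ρN r n) = qN (n ⊗ₜ[ℂ] r) := by
          have : ρN r n = TensorProduct.lift ρN.flip (n ⊗ₜ[ℂ] r) := by simp
          rw [this, ekey]
        rw [h2, hBbarq, hBtmul]
  have hsurj : Function.Surjective (TensorProduct.lift ρT.flip) := by
    intro t
    obtain ⟨y, rfl⟩ := Submodule.mkQ_surjective _ t
    induction y using TensorProduct.induction_on with
    | zero => exact ⟨0, by simp⟩
    | add a b ha hb =>
      obtain ⟨z1, hz1⟩ := ha
      obtain ⟨z2, hz2⟩ := hb
      exact ⟨z1 + z2, by rw [map_add, hz1, hz2, map_add]⟩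
    | tmul m n =>
      obtain ⟨u, hu⟩ := hfbij.2 n
      obtain ⟨x, rfl⟩ := Submodule.mkQ_surjective _ u
      have hn : n = TensorProduct.lift ρN.flip x := by
        rw [← hu]; exact LinearMap.congr_fun hfq x
      rw [hn]
      clear hn hu
      induction x using TensorProduct.induction_on with
      | zero => exact ⟨0, by simp⟩
      | add a b ha hb =>
        obtain ⟨z1, hz1⟩ := ha
        obtain ⟨z2, hz2⟩ := hb
        exact ⟨z1 + z2, by
          rw [map_add, hz1, hz2, map_add, TensorProduct.tmul_add, map_add]⟩
      | tmul n' r =>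
        refine ⟨q (m ⊗ₜ[ℂ] n') ⊗ₜ[ℂ] r, ?_⟩
        rw [TensorProduct.lift.tmul, LinearMap.flip_apply, hq, hρT r m n',
          TensorProduct.lift.tmul]
        simp [hq, Submodule.mkQ_apply]
  exact ⟨hsurj, h, hsec⟩

end Bimod

set_option maxHeartbeats 4000000 in

/-- For a quasi-unital ring `R`, the two-sidedly smooth `R`-bimodules form a monoidal
category under `⊗_R` with unit `R`: for every two-sidedly smooth bimodule `M` the
canonical maps `R ⊗_R M → M` and `M ⊗_R R → M` are isomorphisms, and the relative
tensor product `M ⊗_R N` of two two-sidedly smooth bimodules is again smooth on both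
sides. -/
theorem smooth_bimodules_monoidal
    (hR : IsQuasiUnital R)
    -- the bimodule `M`
    {M : Type} [AddCommGroup M] [Module ℂ M]
    (lM ρM : R →ₗ[ℂ] M →ₗ[ℂ] M)
    (hlM : ∀ (r s : R) (m : M), lM (r * s) m = lM r (lM s m))
    (hρM : ∀ (r s : R) (m : M), ρM (r * s) m = ρM s (ρM r m))
    (hcM : ∀ (r s : R) (m : M), lM r (ρM s m) = ρM s (lM r m))
    (hMl : ∃ f : ((R ⊗[ℂ] M) ⧸ LinearMap.range (barDl R lM)) →ₗ[ℂ] M,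
      f ∘ₗ (LinearMap.range (barDl R lM)).mkQ = TensorProduct.lift lM ∧
      Function.Bijective f)
    (hMr : ∃ f : ((M ⊗[ℂ] R) ⧸ LinearMap.range (barDr R ρM)) →ₗ[ℂ] M,
      f ∘ₗ (LinearMap.range (barDr R ρM)).mkQ = TensorProduct.lift ρM.flip ∧
      Function.Bijective f)
    -- the bimodule `N`
    {N : Type} [AddCommGroup N] [Module ℂ N]
    (lN ρN : R →ₗ[ℂ] N →ₗ[ℂ] N)
    (hlN : ∀ (r s : R) (n : N), lN (r * s) n = lN r (lN s n))
    (hρN : ∀ (r s : R) (n : N), ρN (r * s) n = ρN s (ρN r n))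
    (hcN : ∀ (r s : R) (n : N), lN r (ρN s n) = ρN s (lN r n))
    (hNl : ∃ f : ((R ⊗[ℂ] N) ⧸ LinearMap.range (barDl R lN)) →ₗ[ℂ] N,
      f ∘ₗ (LinearMap.range (barDl R lN)).mkQ = TensorProduct.lift lN ∧
      Function.Bijective f)
    (hNr : ∃ f : ((N ⊗[ℂ] R) ⧸ LinearMap.range (barDr R ρN)) →ₗ[ℂ] N,
      f ∘ₗ (LinearMap.range (barDr R ρN)).mkQ = TensorProduct.lift ρN.flip ∧
      Function.Bijective f)
    -- the induced bimodule structure on `T = M ⊗_R N`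
    (lT ρT : R →ₗ[ℂ] RelTensor R ρM lN →ₗ[ℂ] RelTensor R ρM lN)
    (hlT : ∀ (r : R) (m : M) (n : N),
      lT r ((LinearMap.range (barDRel R ρM lN)).mkQ (m ⊗ₜ[ℂ] n)) =
        (LinearMap.range (barDRel R ρM lN)).mkQ ((lM r m) ⊗ₜ[ℂ] n))
    (hρT : ∀ (r : R) (m : M) (n : N),
      ρT r ((LinearMap.range (barDRel R ρM lN)).mkQ (m ⊗ₜ[ℂ] n)) =
        (LinearMap.range (barDRel R ρM lN)).mkQ (m ⊗ₜ[ℂ] (ρN r n))) :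
    -- unit isomorphisms: `R ⊗_R M ≅ M` and `M ⊗_R R ≅ M`
    (∀ f : ((R ⊗[ℂ] M) ⧸ LinearMap.range (barDl R lM)) →ₗ[ℂ] M,
      f ∘ₗ (LinearMap.range (barDl R lM)).mkQ = TensorProduct.lift lM →
      Function.Bijective f) ∧
    (∀ f : ((M ⊗[ℂ] R) ⧸ LinearMap.range (barDr R ρM)) →ₗ[ℂ] M,
      f ∘ₗ (LinearMap.range (barDr R ρM)).mkQ = TensorProduct.lift ρM.flip →
      Function.Bijective f) ∧
    -- `M ⊗_R N` is again smooth on both sides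
    (∀ g : ((R ⊗[ℂ] RelTensor R ρM lN) ⧸ LinearMap.range (barDl R lT)) →ₗ[ℂ]
        RelTensor R ρM lN,
      g ∘ₗ (LinearMap.range (barDl R lT)).mkQ = TensorProduct.lift lT →
      Function.Bijective g) ∧
    (∀ g : ((RelTensor R ρM lN ⊗[ℂ] R) ⧸ LinearMap.range (barDr R ρT)) →ₗ[ℂ]
        RelTensor R ρM lN,
      g ∘ₗ (LinearMap.range (barDr R ρT)).mkQ = TensorProduct.lift ρT.flip →
      Function.Bijective g) := by
  refine ⟨?_, ?_, ?_, ?_⟩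
  · intro f hf
    obtain ⟨f₀, hf₀, hf₀bij⟩ := hMl
    have hfeq : f = f₀ := Submodule.linearMap_qext _ (by rw [hf, hf₀])
    rw [hfeq]; exact hf₀bij
  · intro f hf
    obtain ⟨f₀, hf₀, hf₀bij⟩ := hMr
    have hfeq : f = f₀ := Submodule.linearMap_qext _ (by rw [hf, hf₀])
    rw [hfeq]; exact hf₀bij
  · intro g hg
    obtain ⟨hsurj, h, hsec⟩ := left_transfer R lM ρM hcM hMl lN lT hlT
    exact bijective_of_comp (LinearMap.range (barDl R lT)).mkQ (TensorProduct.lift lT) g h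
      (Submodule.mkQ_surjective _) hsurj (fun a => LinearMap.congr_fun hg a) hsec
  · intro g hg
    obtain ⟨hsurj, h, hsec⟩ := right_transfer R ρM lN ρN hcN hNr ρT hρT
    exact bijective_of_comp (LinearMap.range (barDr R ρT)).mkQ (TensorProduct.lift ρT.flip) g h
      (Submodule.mkQ_surjective _) hsurj (fun a => LinearMap.congr_fun hg a) hsec
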